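/- If y : ℝ → ℝ is bounded below and the greatest convex minorants T(y) (over ℝ) and T_c(y) (over [−c,c]) have no point of touch on a subinterval I ⊆ [−c,c] (i.e., T(y)(t) < T_c(y)(t) for all t ∈ I), then T(y) is affine on I. -/

import Mathlib

open Set

noncomputable def gcm (O : Set ℝ) (x : ℝ → ℝ) (t : ℝ) : ℝ :=
  sSup {v : ℝ | ∃ z : ℝ → ℝ, ConvexOn ℝ O z ∧ (∀ s ∈ O, z s ≤ x s) ∧ v = z t}

lemma gcm_set_nonempty (y : ℝ → ℝ) (hbdd : BddBelow (Set.range y)) {O : Set ℝ}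
    (hO : Convex ℝ O) (t : ℝ) :
    {v : ℝ | ∃ z : ℝ → ℝ, ConvexOn ℝ O z ∧ (∀ s ∈ O, z s ≤ y s) ∧ v = z t}.Nonempty := by
  obtain ⟨B, hB⟩ := hbdd
  exact ⟨B, fun _ => B, convexOn_const _ hO, fun s _ => hB ⟨s, rfl⟩, rfl⟩

lemma gcm_set_bddAbove (y : ℝ → ℝ) {O : Set ℝ} {t : ℝ} (ht : t ∈ O) :
    BddAbove {v : ℝ | ∃ z : ℝ → ℝ, ConvexOn ℝ O z ∧ (∀ s ∈ O, z s ≤ y s) ∧ v = z t} := by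
  refine ⟨y t, fun v hv => ?_⟩
  obtain ⟨z, _, hzy, rfl⟩ := hv
  exact hzy t ht

lemma le_gcm {y : ℝ → ℝ} {O : Set ℝ} {z : ℝ → ℝ} {t : ℝ}
    (hz : ConvexOn ℝ O z) (hzy : ∀ s ∈ O, z s ≤ y s) (ht : t ∈ O) :
    z t ≤ gcm O y t :=
  le_csSup (gcm_set_bddAbove y ht) ⟨z, hz, hzy, rfl⟩

lemma gcm_le (y : ℝ → ℝ) (hbdd : BddBelow (Set.range y)) {O : Set ℝ}
    (hO : Convex ℝ O) {t : ℝ} (ht : t ∈ O) : gcm O y t ≤ y t := by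
  refine csSup_le (gcm_set_nonempty y hbdd hO t) ?_
  rintro v ⟨z, _, hzy, rfl⟩
  exact hzy t ht

lemma gcm_convexOn (y : ℝ → ℝ) (hbdd : BddBelow (Set.range y)) {O : Set ℝ}
    (hO : Convex ℝ O) : ConvexOn ℝ O (gcm O y) := by
  refine ⟨hO, fun u hu v hv a b ha hb hab => ?_⟩
  have hmem : a • u + b • v ∈ O := hO hu hv ha hb hab
  refine csSup_le (gcm_set_nonempty y hbdd hO _) ?_
  rintro w ⟨z, hz, hzy, rfl⟩
  calc z (a • u + b • v) ≤ a • z u + b • z v := hz.2 hu hv ha hb hab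
    _ ≤ a • gcm O y u + b • gcm O y v := by
        simp only [smul_eq_mul]
        have h1 := mul_le_mul_of_nonneg_left (le_gcm hz hzy hu) ha
        have h2 := mul_le_mul_of_nonneg_left (le_gcm hz hzy hv) hb
        linarith

lemma chord_le {f : ℝ → ℝ} (hf : ConvexOn ℝ (univ : Set ℝ) f) {u v w : ℝ}
    (h1 : u < v) (h2 : v < w) :
    (w - u) * f v ≤ (w - v) * f u + (v - u) * f w := by
  have huw : (0:ℝ) < w - u := by linarith
  have h := @hf.2 u (mem_univ u) w (mem_univ w) ((w - v)/(w - u)) ((v - u)/(w - u))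
    (div_nonneg (by linarith) huw.le) (div_nonneg (by linarith) huw.le) (by field_simp; ring)
  simp only [smul_eq_mul] at h
  have hpt : (w - v)/(w - u) * u + (v - u)/(w - u) * w = v := by field_simp; ring
  rw [hpt] at h
  have := mul_le_mul_of_nonneg_left h huw.le
  calc (w - u) * f v ≤ (w - u) * ((w - v)/(w - u) * f u + (v - u)/(w - u) * f w) := this
    _ = (w - v) * f u + (v - u) * f w := by field_simp

/-- If the greatest convex minorants over ℝ and over [-c,c] have no point of touch on a
subinterval I of [-c,c], then the global one is affine on I. -/
theorem gcm_affine_of_no_touch (y : ℝ → ℝ) (hbdd : BddBelow (Set.range y))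
    (c : ℝ) (hc : 0 < c) (I : Set ℝ) (hI : Convex ℝ I) (hIc : I ⊆ Icc (-c) c)
    (hnotouch : ∀ t ∈ I, gcm Set.univ y t < gcm (Icc (-c) c) y t) :
    ∃ a b : ℝ, ∀ t ∈ I, gcm Set.univ y t = a * t + b := by
  set f := gcm Set.univ y with hfdef
  set g := gcm (Icc (-c) c) y with hgdef
  have hIcc : Convex ℝ (Icc (-c) c) := convex_Icc _ _
  have hf : ConvexOn ℝ univ f := gcm_convexOn y hbdd convex_univ
  have hfy : ∀ s, f s ≤ y s := fun s => gcm_le y hbdd convex_univ (mem_univ s)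
  have hfcont : Continuous f := by
    rw [← continuousOn_univ]
    have := hf.continuousOn_interior
    rwa [interior_univ] at this
  have hgy : ∀ s ∈ Icc (-c) c, g s ≤ y s := fun s hs => gcm_le y hbdd hIcc hs
  have hg : ConvexOn ℝ (Icc (-c) c) g := gcm_convexOn y hbdd hIcc
  have hgcont : ContinuousOn g (Ioo (-c) c) := by
    have := hg.continuousOn_interior
    rwa [interior_Icc] at this
  -- Key chord equality
  have key : ∀ p r x : ℝ, p ∈ I → r ∈ I → -c < p → r < c → p < x → x < r →
      (r - p) * f x = (r - x) * f p + (x - p) * f r := by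
    intro p r x hpI hrI hpc hrc hpx hxr
    have hpr : p < r := hpx.trans hxr
    have h0 : (0:ℝ) < r - p := by linarith
    have hch := chord_le hf hpx hxr
    rcases lt_or_eq_of_le hch with hlt | heq
    swap
    · exact heq
    exfalso
    obtain ⟨L, hLdef⟩ : ∃ L : ℝ → ℝ, L = fun s => f p + (s - p) * ((f r - f p) / (r - p)) :=
      ⟨_, rfl⟩
    have hid : ∀ s : ℝ, (r - p) * L s = (r - s) * f p + (s - p) * f r := by
      intro s
      rw [hLdef]
      field_simp
      ring
    have hLx : f x < L x := by
      have h1 : (r - p) * f x < (r - p) * L x := by rw [hid x]; linarith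
      exact lt_of_mul_lt_mul_left h1 h0.le
    have hLout : ∀ s : ℝ, s ≤ p ∨ r ≤ s → L s ≤ f s := by
      intro s hs
      have h1 : (r - p) * L s ≤ (r - p) * f s := by
        rw [hid s]
        rcases hs with hs | hs
        · rcases lt_or_eq_of_le hs with hs' | hs'
          · have := chord_le hf hs' hpr
            linarith
          · subst hs'; exact le_of_eq (by ring)
        · rcases lt_or_eq_of_le hs with hs' | hs'
          · have := chord_le hf hpr hs'
            linarith
          · subst hs'; exact le_of_eq (by ring)
      exact le_of_mul_le_mul_left h1 h0
    have hLconv : ConvexOn ℝ (univ : Set ℝ) L := by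
      refine ⟨convex_univ, fun x1 _ x2 _ a1 b1 ha1 hb1 hab1 => le_of_eq ?_⟩
      simp only [smul_eq_mul, hLdef]
      linear_combination (p * ((f r - f p) / (r - p)) - f p) * hab1
    by_cases hexist : ∃ η > 0, ∀ s ∈ Ioo p r, f s + η ≤ y s
    · obtain ⟨η, hη0, hηy⟩ := hexist
      have hLcont : Continuous L := by
        rw [hLdef]
        exact continuous_const.add ((continuous_id.sub continuous_const).mul continuous_const)
      obtain ⟨s0, hs0, hmax⟩ := (isCompact_Icc (a := p) (b := r)).exists_isMaxOn
        (nonempty_Icc.2 hpr.le) ((hLcont.sub hfcont).continuousOn)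
      obtain ⟨Γ, hΓdef⟩ : ∃ w : ℝ, w = L s0 - f s0 := ⟨_, rfl⟩
      have hΓ : ∀ s ∈ Icc p r, L s - f s ≤ Γ := by
        rw [hΓdef]; exact fun s hs => hmax hs
      have hΓpos : 0 < Γ := lt_of_lt_of_le (by linarith) (hΓ x ⟨hpx.le, hxr.le⟩)
      obtain ⟨θ, hθdef⟩ : ∃ w : ℝ, w = min 1 (η / Γ) := ⟨_, rfl⟩
      have hθ0 : 0 < θ := hθdef ▸ lt_min one_pos (div_pos hη0 hΓpos)
      have hθ1 : θ ≤ 1 := hθdef ▸ min_le_left _ _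
      have hθle : θ ≤ η / Γ := hθdef ▸ min_le_right _ _
      obtain ⟨h, hhdef⟩ : ∃ h : ℝ → ℝ, h = fun s => (1 - θ) * f s + θ * max (f s) (L s) :=
        ⟨_, rfl⟩
      have hhconv : ConvexOn ℝ (univ : Set ℝ) h := by
        refine ⟨convex_univ, fun x1 _ x2 _ a1 b1 ha1 hb1 hab1 => ?_⟩
        have hfle := hf.2 (mem_univ x1) (mem_univ x2) ha1 hb1 hab1
        have hLle := hLconv.2 (mem_univ x1) (mem_univ x2) ha1 hb1 hab1
        simp only [smul_eq_mul] at hfle hLle ⊢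
        simp only [hhdef]
        have hm : max (f (a1 * x1 + b1 * x2)) (L (a1 * x1 + b1 * x2)) ≤
            a1 * max (f x1) (L x1) + b1 * max (f x2) (L x2) := by
          have e1 := mul_le_mul_of_nonneg_left (le_max_left (f x1) (L x1)) ha1
          have e2 := mul_le_mul_of_nonneg_left (le_max_left (f x2) (L x2)) hb1
          have e3 := mul_le_mul_of_nonneg_left (le_max_right (f x1) (L x1)) ha1
          have e4 := mul_le_mul_of_nonneg_left (le_max_right (f x2) (L x2)) hb1
          exact max_le (by linarith) (by linarith)
        have hf2 := mul_le_mul_of_nonneg_left hfle (by linarith : (0:ℝ) ≤ 1 - θ)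
        have hm2 := mul_le_mul_of_nonneg_left hm hθ0.le
        linarith
      have hhy : ∀ s ∈ (univ : Set ℝ), h s ≤ y s := by
        intro s _
        rcases le_or_gt (L s) (f s) with hcase | hcase
        · have : h s = f s := by simp only [hhdef]; rw [max_eq_left hcase]; ring
          rw [this]; exact hfy s
        · have hsin : p < s ∧ s < r := by
            by_contra hcon
            push_neg at hcon
            rcases le_or_gt s p with h1 | h1
            · exact absurd hcase (not_lt.2 (hLout s (Or.inl h1)))
            · exact absurd hcase (not_lt.2 (hLout s (Or.inr (hcon h1))))
          have hsIcc : s ∈ Icc p r := ⟨hsin.1.le, hsin.2.le⟩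
          have h1 : h s = f s + θ * (L s - f s) := by
            simp only [hhdef]; rw [max_eq_right hcase.le]; ring
          have h2 : θ * (L s - f s) ≤ (η / Γ) * Γ :=
            mul_le_mul hθle (hΓ s hsIcc) (by linarith)
              (div_pos hη0 hΓpos).le
          have h3 : (η / Γ) * Γ = η := div_mul_cancel₀ η hΓpos.ne'
          have h4 := hηy s ⟨hsin.1, hsin.2⟩
          linarith
      have hle := le_gcm hhconv hhy (mem_univ x)
      have hhx : h x = f x + θ * (L x - f x) := by
        simp only [hhdef]; rw [max_eq_right hLx.le]; ring
      nlinarith [mul_pos hθ0 (by linarith : (0:ℝ) < L x - f x)]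
    · push_neg at hexist
      have hseq : ∀ n : ℕ, ∃ s ∈ Ioo p r, y s < f s + 1 / (n + 1) := by
        intro n
        obtain ⟨s, hs1, hs2⟩ := hexist (1 / (n + 1)) (by positivity)
        exact ⟨s, hs1, by linarith⟩
      choose t ht1 ht2 using hseq
      obtain ⟨t0, ht0, φ, hφ, htend⟩ := (isCompact_Icc (a := p) (b := r)).tendsto_subseq
        (fun n => Ioo_subset_Icc_self (ht1 n))
      have ht0I : t0 ∈ I := hI.ordConnected.out hpI hrI ht0
      have ht0cc : t0 ∈ Ioo (-c) c :=
        ⟨lt_of_lt_of_le hpc ht0.1, lt_of_le_of_lt ht0.2 hrc⟩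
      have hgat : ContinuousAt g t0 := hgcont.continuousAt (isOpen_Ioo.mem_nhds ht0cc)
      have hA : Filter.Tendsto (fun n => g (t (φ n))) Filter.atTop (nhds (g t0)) :=
        hgat.tendsto.comp htend
      have hC : Filter.Tendsto (fun n : ℕ => 1 / ((φ n : ℝ) + 1)) Filter.atTop (nhds 0) :=
        tendsto_one_div_add_atTop_nhds_zero_nat.comp hφ.tendsto_atTop
      have hB : Filter.Tendsto (fun n => f (t (φ n)) + 1 / ((φ n : ℝ) + 1)) Filter.atTop
          (nhds (f t0 + 0)) := (hfcont.continuousAt.tendsto.comp htend).add hC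
      have hle : g t0 ≤ f t0 + 0 := by
        refine le_of_tendsto_of_tendsto' hA hB (fun n => ?_)
        have hmem : t (φ n) ∈ Icc (-c) c := by
          have := ht1 (φ n)
          constructor <;> [linarith [this.1]; linarith [this.2]]
        exact le_trans (hgy _ hmem) (ht2 (φ n)).le
      have := hnotouch t0 ht0I
      rw [add_zero] at hle
      linarith
  -- Assembly
  by_cases hIone : ∀ u ∈ I, ∀ v ∈ I, u = v
  · rcases Set.eq_empty_or_nonempty I with hE | ⟨t0, ht0⟩
    · exact ⟨0, 0, fun t ht => absurd ht (by simp [hE])⟩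
    · exact ⟨0, f t0, fun t ht => by rw [hIone t ht t0 ht0]; ring⟩
  · push_neg at hIone
    obtain ⟨u, v, hu, hv, huv⟩ : ∃ u v, u ∈ I ∧ v ∈ I ∧ u < v := by
      obtain ⟨u, hu, v, hv, huv⟩ := hIone
      rcases (Ne.lt_or_gt huv) with h | h
      · exact ⟨u, v, hu, hv, h⟩
      · exact ⟨v, u, hv, hu, h⟩
    have hucc := hIc hu
    have hvcc := hIc hv
    obtain ⟨p0, hp0def⟩ : ∃ w : ℝ, w = u + (v - u) / 3 := ⟨_, rfl⟩
    obtain ⟨r0, hr0def⟩ : ∃ w : ℝ, w = u + 2 * (v - u) / 3 := ⟨_, rfl⟩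
    have hp0I : p0 ∈ I := hI.ordConnected.out hu hv ⟨by linarith, by linarith⟩
    have hr0I : r0 ∈ I := hI.ordConnected.out hu hv ⟨by linarith, by linarith⟩
    have hp0c : -c < p0 := by have := hucc.1; linarith
    have hr0c : r0 < c := by have := hvcc.2; linarith
    have hp0r0 : p0 < r0 := by linarith
    have hne : r0 - p0 ≠ 0 := by linarith
    obtain ⟨a, hadef⟩ : ∃ w : ℝ, w = (f r0 - f p0) / (r0 - p0) := ⟨_, rfl⟩
    refine ⟨a, f p0 - p0 * a, fun t ht => ?_⟩
    have haeq : (r0 - p0) * a = f r0 - f p0 := by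
      rw [hadef]; field_simp
    -- general: any s in I with f-value determined
    have hval : ∀ s : ℝ, s ∈ I → p0 < s → s < r0 → f s = a * s + (f p0 - p0 * a) := by
      intro s _ h1 h2
      have hk := key p0 r0 s hp0I hr0I hp0c hr0c h1 h2
      have h3 : (0:ℝ) < r0 - p0 := by linarith
      have : (r0 - p0) * f s = (r0 - p0) * (a * s + (f p0 - p0 * a)) := by
        rw [hk]
        have : (r0 - p0) * (a * s + (f p0 - p0 * a)) =
            (s - p0) * ((r0 - p0) * a) + (r0 - p0) * f p0 := by ring
        rw [this, haeq]; ring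
      exact mul_left_cancel₀ (by linarith) this
    rcases lt_trichotomy t p0 with hcase | hcase | hcase
    · -- t < p0 : approximate from the right
      have hsval : ∀ s : ℝ, t < s → s < p0 → f s = a * s + (f p0 - p0 * a) := by
        intro s h1 h2
        have hsI : s ∈ I := hI.ordConnected.out ht hp0I ⟨h1.le, h2.le⟩
        have hsc : -c < s := lt_of_le_of_lt (hIc ht).1 h1
        have hk := key s r0 p0 hsI hr0I hsc hr0c h2 hp0r0
        -- (r0 - s) * f p0 = (r0 - p0) * f s + (p0 - s) * f r0
        have h3 : (r0 - p0) * f s = (r0 - s) * f p0 - (p0 - s) * f r0 := by linarith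
        have : (r0 - p0) * f s = (r0 - p0) * (a * s + (f p0 - p0 * a)) := by
          rw [h3]
          have h4 : (r0 - p0) * (a * s + (f p0 - p0 * a)) =
              (s - p0) * ((r0 - p0) * a) + (r0 - p0) * f p0 := by ring
          rw [h4, haeq]; ring
        exact mul_left_cancel₀ hne this
      obtain ⟨q, hqdef⟩ : ∃ q : ℕ → ℝ, q = fun n : ℕ => t + (p0 - t) / 2 * (1 / ((n : ℝ) + 1)) := ⟨_, rfl⟩
      have hq : ∀ n : ℕ, t < q n ∧ q n < p0 := by
        intro n
        have h1 : (0:ℝ) < 1 / (n + 1) := by positivity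
        have h2 : (1:ℝ) / (n + 1) ≤ 1 := by
          rw [div_le_one (by positivity)]
          simp [Nat.cast_nonneg]
        have hp1 : 0 < (p0 - t) / 2 * (1 / ((n:ℝ) + 1)) := mul_pos (by linarith) h1
        have hp2 : (p0 - t) / 2 * (1 / ((n:ℝ) + 1)) ≤ (p0 - t) / 2 :=
          mul_le_of_le_one_right (by linarith) h2
        constructor
        · rw [hqdef]; dsimp only; linarith
        · rw [hqdef]; dsimp only; linarith
      have hqt : Filter.Tendsto q Filter.atTop (nhds t) := by
        rw [hqdef]
        have : Filter.Tendsto (fun n : ℕ => t + (p0 - t) / 2 * (1 / (n + 1)))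
            Filter.atTop (nhds (t + (p0 - t) / 2 * 0)) :=
          Filter.Tendsto.add tendsto_const_nhds
            (Filter.Tendsto.mul tendsto_const_nhds tendsto_one_div_add_atTop_nhds_zero_nat)
        simpa using this
      have h1 : Filter.Tendsto (fun n => f (q n)) Filter.atTop (nhds (f t)) :=
        hfcont.continuousAt.tendsto.comp hqt
      have h2 : Filter.Tendsto (fun n => a * q n + (f p0 - p0 * a)) Filter.atTop
          (nhds (a * t + (f p0 - p0 * a))) :=
        Filter.Tendsto.add (Filter.Tendsto.mul tendsto_const_nhds hqt) tendsto_const_nhds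
      have h3 : (fun n => f (q n)) = fun n => a * q n + (f p0 - p0 * a) :=
        funext fun n => hsval (q n) (hq n).1 (hq n).2
      rw [h3] at h1
      exact tendsto_nhds_unique h1 h2
    · rw [hcase]; ring
    · rcases lt_trichotomy t r0 with hcase2 | hcase2 | hcase2
      · exact hval t ht hcase hcase2
      · rw [hcase2]
        have : a * r0 + (f p0 - p0 * a) = (r0 - p0) * a + f p0 := by ring
        rw [this, haeq]; ring
      · -- t > r0 : approximate from the left
        have hsval : ∀ s : ℝ, r0 < s → s < t → f s = a * s + (f p0 - p0 * a) := by
          intro s h1 h2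
          have hsI : s ∈ I := hI.ordConnected.out hr0I ht ⟨h1.le, h2.le⟩
          have hsc : s < c := lt_of_lt_of_le h2 (hIc ht).2
          have hk := key p0 s r0 hp0I hsI hp0c hsc hp0r0 h1
          -- (s - p0) * f r0 = (s - r0) * f p0 + (r0 - p0) * f s
          have h3 : (r0 - p0) * f s = (s - p0) * f r0 - (s - r0) * f p0 := by linarith
          have : (r0 - p0) * f s = (r0 - p0) * (a * s + (f p0 - p0 * a)) := by
            rw [h3]
            have h4 : (r0 - p0) * (a * s + (f p0 - p0 * a)) =
                (s - p0) * ((r0 - p0) * a) + (r0 - p0) * f p0 := by ring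
            rw [h4, haeq]; ring
          exact mul_left_cancel₀ hne this
        obtain ⟨q, hqdef⟩ : ∃ q : ℕ → ℝ, q = fun n : ℕ => t - (t - r0) / 2 * (1 / ((n : ℝ) + 1)) := ⟨_, rfl⟩
        have hq : ∀ n : ℕ, r0 < q n ∧ q n < t := by
          intro n
          have h1 : (0:ℝ) < 1 / (n + 1) := by positivity
          have h2 : (1:ℝ) / (n + 1) ≤ 1 := by
            rw [div_le_one (by positivity)]
            simp [Nat.cast_nonneg]
          have hp1 : 0 < (t - r0) / 2 * (1 / ((n:ℝ) + 1)) := mul_pos (by linarith) h1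
          have hp2 : (t - r0) / 2 * (1 / ((n:ℝ) + 1)) ≤ (t - r0) / 2 :=
            mul_le_of_le_one_right (by linarith) h2
          constructor
          · rw [hqdef]; dsimp only; linarith
          · rw [hqdef]; dsimp only; linarith
        have hqt : Filter.Tendsto q Filter.atTop (nhds t) := by
          rw [hqdef]
          have : Filter.Tendsto (fun n : ℕ => t - (t - r0) / 2 * (1 / (n + 1)))
              Filter.atTop (nhds (t - (t - r0) / 2 * 0)) :=
            Filter.Tendsto.sub tendsto_const_nhds
              (Filter.Tendsto.mul tendsto_const_nhds tendsto_one_div_add_atTop_nhds_zero_nat)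
          simpa using this
        have h1 : Filter.Tendsto (fun n => f (q n)) Filter.atTop (nhds (f t)) :=
          hfcont.continuousAt.tendsto.comp hqt
        have h2 : Filter.Tendsto (fun n => a * q n + (f p0 - p0 * a)) Filter.atTop
            (nhds (a * t + (f p0 - p0 * a))) :=
          Filter.Tendsto.add (Filter.Tendsto.mul tendsto_const_nhds hqt) tendsto_const_nhds
        have h3 : (fun n => f (q n)) = fun n => a * q n + (f p0 - p0 * a) :=
          funext fun n => hsval (q n) (hq n).1 (hq n).2
        rw [h3] at h1
        exact tendsto_nhds_unique h1 h2
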